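/- Let n be a positive integer, k > 0, β ∈ ℝ and A ∈ ℝ with A ≠ 0. If the function u(x) = A·sin(nπx) is a stationary beam solution with parameters β, k, then necessarily β < −μ_n(k) and A² = −2(β + μ_n(k))/(n²π²). -/

import Mathlib

open Real

/-- `μ_n(k) = k/(n²π²) + n²π²`. -/
noncomputable def mu (n : ℕ) (k : ℝ) : ℝ := k / ((n : ℝ)^2 * π^2) + (n : ℝ)^2 * π^2

/-- A stationary beam solution with parameters `β ∈ ℝ`, `k > 0`: a four-times continuously
differentiable function satisfying the beam equation on `[0,1]`
together with the hinged boundary conditions `u(0) = u(1) = u''(0) = u''(1) = 0`. -/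
def IsStationarySolution (β k : ℝ) (u : ℝ → ℝ) : Prop :=
  ContDiff ℝ 4 u ∧
  (∀ x ∈ Set.Icc (0 : ℝ) 1,
    iteratedDeriv 4 u x
      - (β + ∫ y in (0 : ℝ)..1, (deriv u y)^2) * iteratedDeriv 2 u x + k * u x = 0) ∧
  u 0 = 0 ∧ u 1 = 0 ∧ iteratedDeriv 2 u 0 = 0 ∧ iteratedDeriv 2 u 1 = 0


lemma deriv_asin (A c : ℝ) : deriv (fun x => A * Real.sin (c*x)) = fun x => (A*c) * Real.cos (c*x) := by
  funext x
  have h : HasDerivAt (fun x : ℝ => A * Real.sin (c*x)) ((A*c) * Real.cos (c*x)) x := by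
    have h1 : HasDerivAt (fun x : ℝ => c * x) c x := by
      simpa using (hasDerivAt_id x).const_mul c
    have := ((Real.hasDerivAt_sin (c*x)).comp x h1).const_mul A
    exact this.congr_deriv (by ring)
  exact h.deriv

lemma deriv_acos (A c : ℝ) : deriv (fun x => A * Real.cos (c*x)) = fun x => (-(A*c)) * Real.sin (c*x) := by
  funext x
  have h : HasDerivAt (fun x : ℝ => A * Real.cos (c*x)) ((-(A*c)) * Real.sin (c*x)) x := by
    have h1 : HasDerivAt (fun x : ℝ => c * x) c x := by
      simpa using (hasDerivAt_id x).const_mul c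
    have := ((Real.hasDerivAt_cos (c*x)).comp x h1).const_mul A
    exact this.congr_deriv (by ring)
  exact h.deriv

lemma itd2 (A c : ℝ) : iteratedDeriv 2 (fun x => A * Real.sin (c*x)) = fun x => (-(A*c^2)) * Real.sin (c*x) := by
  rw [show (2:ℕ) = 1+1 from rfl, iteratedDeriv_succ, iteratedDeriv_one, deriv_asin, deriv_acos]
  funext x; ring

lemma itd4 (A c : ℝ) : iteratedDeriv 4 (fun x => A * Real.sin (c*x)) = fun x => (A*c^4) * Real.sin (c*x) := by
  rw [show (4:ℕ) = 3+1 from rfl, iteratedDeriv_succ,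
      show (3:ℕ) = 2+1 from rfl, iteratedDeriv_succ, itd2, deriv_asin, deriv_acos]
  funext x; ring

lemma int_cos_sq (n : ℕ) (hn : 1 ≤ n) :
    ∫ y in (0:ℝ)..1, Real.cos ((n:ℝ)*π*y)^2 = 1/2 := by
  have hc : ((n:ℝ)*π) ≠ 0 := by positivity
  rw [intervalIntegral.integral_comp_mul_left (fun x => Real.cos x ^ 2) hc]
  simp [integral_cos_sq, Real.sin_nat_mul_pi]
  have hn0 : (n:ℝ) ≠ 0 := by positivity
  field_simp


/-- If `u(x) = A·sin(nπx)` with `A ≠ 0` is a stationary beam solution with parameters `β`, `k`,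
then `β < −μ_n(k)` and `A² = −2(β + μ_n(k))/(n²π²)`. -/
theorem amplitude_of_buckled_solution (n : ℕ) (hn : 1 ≤ n) (k β A : ℝ) (hk : 0 < k)
    (hA : A ≠ 0)
    (h : IsStationarySolution β k (fun x => A * Real.sin ((n : ℝ) * π * x))) :
    β < -mu n k ∧ A^2 = -2 * (β + mu n k) / ((n : ℝ)^2 * π^2) := by
  set c : ℝ := (n:ℝ)*π with hc
  have hn1 : (1:ℝ) ≤ n := by exact_mod_cast hn
  have hcpos : 0 < c := by positivity
  obtain ⟨-, heq, -⟩ := h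
  have hx0 : (1/(2*(n:ℝ))) ∈ Set.Icc (0:ℝ) 1 := by
    constructor
    · positivity
    · rw [div_le_one (by positivity)]; linarith
  have key := heq _ hx0
  have hcx : c * (1/(2*(n:ℝ))) = π/2 := by
    rw [hc]; field_simp
  rw [itd4, itd2, deriv_asin] at key
  simp only [hcx, Real.sin_pi_div_two, mul_one] at key
  have hint : (∫ y in (0:ℝ)..1, ((A*c) * Real.cos (c*y))^2) = A^2*c^2/2 := by
    simp only [mul_pow]
    rw [intervalIntegral.integral_const_mul, hc, int_cos_sq n hn]
    ring
  rw [hint] at key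
  -- key : A*c^4 - (β + A^2*c^2/2)*(-(A*c^2)) + k*A = 0
  have hc2 : (0:ℝ) < c^2 := by positivity
  have e1 : c^4 + (β + A^2*c^2/2)*c^2 + k = 0 := by
    have : A * (c^4 + (β + A^2*c^2/2)*c^2 + k) = 0 := by linarith [key]
    rcases mul_eq_zero.1 this with h' | h'
    · exact absurd h' hA
    · exact h'
  have hmu : mu n k = k/c^2 + c^2 := by
    rw [mu, hc]; ring_nf
  have hkey : β + mu n k = -(A^2*c^2/2) := by
    rw [hmu]
    have hcne : c^2 ≠ 0 := ne_of_gt hc2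
    field_simp
    nlinarith [e1]
  constructor
  · have hA2 : 0 < A^2 := by positivity
    nlinarith [hkey, mul_pos hA2 hc2]
  · rw [hkey]
    have hcne : c^2 ≠ 0 := ne_of_gt hc2
    have : ((n:ℝ)^2*π^2) = c^2 := by rw [hc]; ring
    rw [this]
    field_simp
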